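/- Let A be a commutative ring and 𝔞 ⊆ A an ideal with ⋂_{n≥1} 𝔞ⁿ = 0. Let Y be a scheme equipped with a separated morphism s : Y → Spec A, and let x, y : Spec A → Y be two morphisms of schemes over Spec A (i.e. x ≫ s and y ≫ s both equal the identity of Spec A). If for every n ≥ 1 the composites Spec(A/𝔞ⁿ) → Spec A → Y along x and along y coincide (where Spec(A/𝔞ⁿ) → Spec A is induced by the quotient map A → A/𝔞ⁿ), then x = y. -/

import Mathlib

open AlgebraicGeometry CategoryTheory

open CategoryTheory.Limits

universe u

set_option maxHeartbeats 1000000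
set_option synthInstance.maxHeartbeats 200000

/-- Let `𝔞 ⊆ A` be an ideal with `⋂_{n≥1} 𝔞ⁿ = 0`, `Y` a scheme with a separated morphism
`s : Y → Spec A`, and `x, y : Spec A → Y` two sections of `s`. If for every `n ≥ 1` the
composites `Spec (A/𝔞ⁿ) → Spec A → Y` along `x` and along `y` coincide, then `x = y`. -/
theorem stmt3 (A : Type u) [CommRing A] (𝔞 : Ideal A)
    (h𝔞 : (⨅ n : ℕ, 𝔞 ^ (n + 1)) = ⊥)
    (Y : Scheme.{u}) (s : Y ⟶ Spec (CommRingCat.of A)) [IsSeparated s]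
    (x y : Spec (CommRingCat.of A) ⟶ Y)
    (hx : x ≫ s = 𝟙 _) (hy : y ≫ s = 𝟙 _)
    (hxy : ∀ n : ℕ, 1 ≤ n →
      Spec.map (CommRingCat.ofHom (Ideal.Quotient.mk (𝔞 ^ n))) ≫ x =
        Spec.map (CommRingCat.ofHom (Ideal.Quotient.mk (𝔞 ^ n))) ≫ y) :
    x = y := by
  let S := Spec (CommRingCat.of A)
  let X' : Over S := Over.mk (𝟙 S)
  let Y' : Over S := Over.mk s
  have : IsSeparated Y'.hom := ‹_›
  let x' : X' ⟶ Y' := Over.homMk x hx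
  let y' : X' ⟶ Y' := Over.homMk y hy
  let ι : (equalizer x' y').left ⟶ S := (equalizer.ι x' y').left
  have hι : IsClosedImmersion ι := inferInstance
  -- factorization of Spec (A/𝔞ⁿ) → Spec A through the equalizer
  have hfac : ∀ n : ℕ, 1 ≤ n → ∃ e,
      Spec.map (CommRingCat.ofHom (Ideal.Quotient.mk (𝔞 ^ n))) = e ≫ ι := by
    intro n hn
    let q := Spec.map (CommRingCat.ofHom (Ideal.Quotient.mk (𝔞 ^ n)))
    let Q : Over S := Over.mk q
    let q' : Q ⟶ X' := Over.homMk q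
    have hq : q' ≫ x' = q' ≫ y' := by
      ext1
      exact hxy n hn
    refine ⟨(equalizer.lift q' hq).left, ?_⟩
    have h2 := congr($(equalizer.lift_ι q' hq).left)
    rw [Over.comp_left] at h2
    exact h2.symm
  -- anything in the kernel of `ι.appTop` lies in every `𝔞 ^ (n + 1)`, hence is zero
  have key : ∀ u : Γ(S, ⊤), ι.appTop u = 0 → u = 0 := by
    intro u hu
    set a : A := (Scheme.ΓSpecIso (CommRingCat.of A)).hom u with ha
    have haz : a = 0 := by
      have : a ∈ (⨅ n : ℕ, 𝔞 ^ (n + 1)) := by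
        simp only [Ideal.mem_iInf]
        intro n
        obtain ⟨e, he⟩ := hfac (n + 1) (Nat.le_add_left 1 n)
        rw [← Ideal.Quotient.eq_zero_iff_mem]
        have h0 : (Spec.map (CommRingCat.ofHom (Ideal.Quotient.mk (𝔞 ^ (n + 1))))).appTop u
            = 0 := by
          rw [he, Scheme.Hom.comp_appTop, CommRingCat.comp_apply, hu, map_zero]
        calc Ideal.Quotient.mk (𝔞 ^ (n + 1)) a
            = ((Scheme.ΓSpecIso (CommRingCat.of A)).hom ≫
                CommRingCat.ofHom (Ideal.Quotient.mk (𝔞 ^ (n + 1)))) u := rfl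
          _ = ((Spec.map (CommRingCat.ofHom (Ideal.Quotient.mk (𝔞 ^ (n + 1))))).appTop ≫
                (Scheme.ΓSpecIso (CommRingCat.of (A ⧸ 𝔞 ^ (n + 1)))).hom) u := by
              rw [Scheme.ΓSpecIso_naturality]
          _ = (Scheme.ΓSpecIso (CommRingCat.of (A ⧸ 𝔞 ^ (n + 1)))).hom
                ((Spec.map (CommRingCat.ofHom
                  (Ideal.Quotient.mk (𝔞 ^ (n + 1))))).appTop u) := rfl
          _ = 0 := by rw [h0, map_zero]
      rwa [h𝔞, Ideal.mem_bot] at this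
    have hu' : u = (Scheme.ΓSpecIso (CommRingCat.of A)).inv a :=
      ((Scheme.ΓSpecIso (CommRingCat.of A)).hom_inv_id_apply u).symm
    rw [hu', haz, map_zero]
  have hinj : Function.Injective ι.appTop := by
    intro u v huv
    have h0 : ι.appTop (u - v) = 0 := by rw [map_sub, huv, sub_self]
    have := key _ h0
    rwa [sub_eq_zero] at this
  have : IsIso ι := IsClosedImmersion.isIso_of_injective_of_isAffine hinj
  have hcond : ι ≫ x = ι ≫ y := congr($(equalizer.condition x' y').left)
  rwa [cancel_epi ι] at hcond
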